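/- For every binary vector x ∈ {0,1}^n, the follower's optimal value satisfies max_{y ∈ I_Y(x)} β^T y = Σ_{k=1}^{k_f} min_{j ∈ {0,…,n}} ( β_j f_k + Σ_{i ∈ F_k, i > j} (β_i − β_j)(1 − x_i) ). -/

import Mathlib

/-- The follower's optimal value: the maximum of `βᵀy` over binary `y ≤ 1 - x`
satisfying the follower's capacity constraints `∑_{i ∈ F_k} y_i ≤ f_k`. -/
noncomputable def followerVal (n kf : ℕ) (F : Fin kf → Finset ℕ) (f : Fin kf → ℕ)
    (β : ℕ → ℝ) (x : ℕ → ℝ) : ℝ :=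
  sSup {v : ℝ | ∃ y : ℕ → ℝ,
    (∀ i, y i = 0 ∨ y i = 1) ∧
    (∀ i, y i ≤ 1 - x i) ∧
    (∀ k : Fin kf, ∑ i ∈ F k, y i ≤ (f k : ℝ)) ∧
    v = ∑ i ∈ Finset.Icc 1 n, β i * y i}

/-- The dual value for one follower group:
`min_{j ∈ {0,…,n}} ( β_j f + ∑_{i ∈ F, i > j} (β_i - β_j)(1 - x_i) )`. -/
noncomputable def dualVal (n : ℕ) (F : Finset ℕ) (f : ℕ) (β : ℕ → ℝ) (x : ℕ → ℝ) : ℝ :=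
  Finset.inf' (Finset.range (n + 1)) Finset.nonempty_range_add_one
    (fun j => β j * (f : ℝ) + ∑ i ∈ F.filter (fun i => j < i), (β i - β j) * (1 - x i))

/-- The top-`f` elements of `A` (the `f` largest, or all of `A` if `|A| ≤ f`). -/
def topf (A : Finset ℕ) (f : ℕ) : Finset ℕ :=
  A.filter (fun i => (A.filter (fun i' => i < i')).card < f)

lemma topf_subset (A : Finset ℕ) (f : ℕ) : topf A f ⊆ A := Finset.filter_subset _ _

lemma topf_card_le (A : Finset ℕ) (f : ℕ) : (topf A f).card ≤ f := by
  by_contra h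
  push_neg at h
  have hne : (topf A f).Nonempty := Finset.card_pos.mp (lt_of_le_of_lt (Nat.zero_le f) h)
  have hmT : (topf A f).min' hne ∈ topf A f := Finset.min'_mem _ _
  have hmA : (A.filter (fun i' => (topf A f).min' hne < i')).card < f :=
    (Finset.mem_filter.mp hmT).2
  have hsub : (topf A f).erase ((topf A f).min' hne) ⊆
      A.filter (fun i' => (topf A f).min' hne < i') := by
    intro i hi
    have hiT := Finset.mem_of_mem_erase hi
    have hne' := Finset.ne_of_mem_erase hi
    exact Finset.mem_filter.mpr ⟨topf_subset A f hiT,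
      lt_of_le_of_ne (Finset.min'_le _ _ hiT) (Ne.symm hne')⟩
  have hc := Finset.card_le_card hsub
  rw [Finset.card_erase_of_mem hmT] at hc
  omega

lemma topf_eq_of_card_le (A : Finset ℕ) (f : ℕ) (h : A.card ≤ f) : topf A f = A := by
  apply Finset.filter_true_of_mem
  intro i hi
  have hsub : A.filter (fun i' => i < i') ⊆ A.erase i := by
    intro j hj
    rcases Finset.mem_filter.mp hj with ⟨hjA, hij⟩
    exact Finset.mem_erase.mpr ⟨Nat.ne_of_gt hij, hjA⟩
  have hc := Finset.card_le_card hsub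
  rw [Finset.card_erase_of_mem hi] at hc
  have hpos : 0 < A.card := Finset.card_pos.mpr ⟨i, hi⟩
  omega

lemma topf_threshold (A : Finset ℕ) (f : ℕ) (h : f < A.card) :
    ∃ j ∈ A, A.filter (fun i => j < i) = topf A f ∧ (topf A f).card = f := by
  have hTA : topf A f ⊆ A := topf_subset A f
  have hne : (A \ topf A f).Nonempty := by
    rw [Finset.sdiff_nonempty]
    intro hcon
    have h1 := Finset.card_le_card hcon
    have h2 := topf_card_le A f
    omega
  set j := (A \ topf A f).max' hne with hj
  have hjmem : j ∈ A \ topf A f := Finset.max'_mem _ _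
  have hjA : j ∈ A := (Finset.mem_sdiff.mp hjmem).1
  have hjT : j ∉ topf A f := (Finset.mem_sdiff.mp hjmem).2
  have hjcard : f ≤ (A.filter (fun i' => j < i')).card := by
    by_contra hc
    push_neg at hc
    exact hjT (Finset.mem_filter.mpr ⟨hjA, hc⟩)
  have heq : A.filter (fun i => j < i) = topf A f := by
    apply Finset.Subset.antisymm
    · intro i hi
      rcases Finset.mem_filter.mp hi with ⟨hiA, hji⟩
      by_contra hiT
      have hle : i ≤ j := Finset.le_max' _ i (Finset.mem_sdiff.mpr ⟨hiA, hiT⟩)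
      omega
    · intro i hiT
      have hiA : i ∈ A := hTA hiT
      refine Finset.mem_filter.mpr ⟨hiA, ?_⟩
      by_contra hc
      push_neg at hc
      have hij : i < j := lt_of_le_of_ne hc (by rintro rfl; exact hjT hiT)
      have hsub : insert j (A.filter (fun i' => j < i')) ⊆ A.filter (fun i' => i < i') := by
        intro a ha
        rcases Finset.mem_insert.mp ha with rfl | ha
        · exact Finset.mem_filter.mpr ⟨hjA, hij⟩
        · rcases Finset.mem_filter.mp ha with ⟨haA, hja⟩
          exact Finset.mem_filter.mpr ⟨haA, lt_trans hij hja⟩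
      have hcard := Finset.card_le_card hsub
      rw [Finset.card_insert_of_notMem (by simp)] at hcard
      have hiTc : (A.filter (fun i' => i < i')).card < f := (Finset.mem_filter.mp hiT).2
      omega
  have hge : f ≤ (topf A f).card := heq ▸ hjcard
  exact ⟨j, hjA, heq, le_antisymm (topf_card_le A f) hge⟩

lemma weak_duality (n : ℕ) (β : ℕ → ℝ) (hβ0 : β 0 = 0)
    (hβmono : ∀ i j : ℕ, i ≤ j → j ≤ n → β i ≤ β j)
    (F : Finset ℕ) (hFsub : F ⊆ Finset.Icc 1 n) (f : ℕ)
    (x : ℕ → ℝ) (y : ℕ → ℝ) (hy0 : ∀ i, 0 ≤ y i) (hy1 : ∀ i, y i ≤ 1 - x i)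
    (hyf : ∑ i ∈ F, y i ≤ (f : ℝ)) :
    ∑ i ∈ F, β i * y i ≤ dualVal n F f β x := by
  rw [dualVal]
  apply Finset.le_inf'
  intro j hj
  have hjn : j ≤ n := Nat.lt_succ_iff.mp (Finset.mem_range.mp hj)
  have hβj : 0 ≤ β j := hβ0 ▸ hβmono 0 j (Nat.zero_le j) hjn
  have key : ∀ i ∈ F, β i * y i ≤ β j * y i + (if j < i then (β i - β j) * (1 - x i) else 0) := by
    intro i hi
    have hin : i ≤ n := (Finset.mem_Icc.mp (hFsub hi)).2
    by_cases hji : j < i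
    · simp only [if_pos hji]
      have hβij : β j ≤ β i := hβmono j i (le_of_lt hji) hin
      nlinarith [hy0 i, hy1 i]
    · simp only [if_neg hji]
      have hβij : β i ≤ β j := hβmono i j (not_lt.mp hji) hjn
      nlinarith [hy0 i]
  calc ∑ i ∈ F, β i * y i
      ≤ ∑ i ∈ F, (β j * y i + if j < i then (β i - β j) * (1 - x i) else 0) :=
        Finset.sum_le_sum key
    _ = β j * ∑ i ∈ F, y i + ∑ i ∈ F.filter (fun i => j < i), (β i - β j) * (1 - x i) := by
        rw [Finset.sum_add_distrib, ← Finset.mul_sum, Finset.sum_filter]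
    _ ≤ β j * (f : ℝ) + ∑ i ∈ F.filter (fun i => j < i), (β i - β j) * (1 - x i) := by
        have := mul_le_mul_of_nonneg_left hyf hβj
        linarith

lemma filter_sum_eq (F : Finset ℕ) (x : ℕ → ℝ) (hx : ∀ i, x i = 0 ∨ x i = 1)
    (β : ℕ → ℝ) (j : ℕ) :
    ∑ i ∈ F.filter (fun i => j < i), (β i - β j) * (1 - x i)
      = ∑ i ∈ (F.filter (fun i => x i = 0)).filter (fun i => j < i), (β i - β j) := by
  have h1 : ∑ i ∈ (F.filter (fun i => j < i)).filter (fun i => x i = 0),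
      (β i - β j) * (1 - x i)
      = ∑ i ∈ F.filter (fun i => j < i), (β i - β j) * (1 - x i) :=
    Finset.sum_filter_of_ne (by
      intro i _ hne
      rcases hx i with h | h
      · exact h
      · exfalso; apply hne; rw [h]; ring)
  rw [← h1, Finset.filter_comm]
  apply Finset.sum_congr rfl
  intro i hi
  have hx0 : x i = 0 := (Finset.mem_filter.mp (Finset.mem_filter.mp hi).1).2
  rw [hx0]; ring

lemma dual_eq_top (n : ℕ) (β : ℕ → ℝ) (hβ0 : β 0 = 0)
    (hβmono : ∀ i j : ℕ, i ≤ j → j ≤ n → β i ≤ β j)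
    (F : Finset ℕ) (hFsub : F ⊆ Finset.Icc 1 n) (f : ℕ)
    (x : ℕ → ℝ) (hx : ∀ i, x i = 0 ∨ x i = 1) :
    dualVal n F f β x = ∑ i ∈ topf (F.filter (fun i => x i = 0)) f, β i := by
  classical
  set A := F.filter (fun i => x i = 0) with hA
  set T := topf A f with hT
  have hTA : T ⊆ A := topf_subset A f
  have hAF : A ⊆ F := Finset.filter_subset _ _
  have hx1 : ∀ i, x i ≤ 1 := fun i => by rcases hx i with h | h <;> simp [h]
  have hge : ∑ i ∈ T, β i ≤ dualVal n F f β x := by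
    have hw := weak_duality n β hβ0 hβmono F hFsub f x
      (fun i => if i ∈ T then 1 else 0)
      (fun i => by by_cases h : i ∈ T <;> simp [h])
      (fun i => by
        by_cases h : i ∈ T
        · have hx0 : x i = 0 := (Finset.mem_filter.mp (hTA h)).2
          simp [h, hx0]
        · simp only [if_neg h]
          linarith [hx1 i])
      (by
        simp only [Finset.sum_ite_mem, Finset.sum_const, nsmul_eq_mul, mul_one]
        rw [Finset.inter_eq_right.mpr (hTA.trans hAF)]
        exact_mod_cast topf_card_le A f)
    calc ∑ i ∈ T, β i = ∑ i ∈ F, β i * (if i ∈ T then 1 else 0) := by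
          simp only [mul_ite, mul_one, mul_zero, Finset.sum_ite_mem]
          rw [Finset.inter_eq_right.mpr (hTA.trans hAF)]
      _ ≤ dualVal n F f β x := hw
  have hle : dualVal n F f β x ≤ ∑ i ∈ T, β i := by
    by_cases hcard : A.card ≤ f
    · have hTeq : T = A := topf_eq_of_card_le A f hcard
      have h0 : (0 : ℕ) ∈ Finset.range (n + 1) := Finset.mem_range.mpr (Nat.succ_pos n)
      have hdle := Finset.inf'_le
        (fun j => β j * (f : ℝ) + ∑ i ∈ F.filter (fun i => j < i), (β i - β j) * (1 - x i)) h0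
      rw [dualVal]
      refine le_trans hdle ?_
      rw [filter_sum_eq F x hx β 0]
      have hfilt : A.filter (fun i => 0 < i) = A := by
        apply Finset.filter_true_of_mem
        intro i hi
        have := (Finset.mem_Icc.mp (hFsub (hAF hi))).1
        omega
      rw [← hA, hfilt, hβ0, hTeq]
      simp
    · push_neg at hcard
      obtain ⟨j, hjA, hfilt, hcardT⟩ := topf_threshold A f hcard
      have hjn : j ≤ n := (Finset.mem_Icc.mp (hFsub (hAF hjA))).2
      have hjr : j ∈ Finset.range (n + 1) := Finset.mem_range.mpr (Nat.lt_succ_of_le hjn)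
      have hdle := Finset.inf'_le
        (fun j => β j * (f : ℝ) + ∑ i ∈ F.filter (fun i => j < i), (β i - β j) * (1 - x i)) hjr
      rw [dualVal]
      refine le_trans hdle ?_
      rw [filter_sum_eq F x hx β j, ← hA, hfilt, ← hT, Finset.sum_sub_distrib,
        Finset.sum_const, hcardT, nsmul_eq_mul]
      ring_nf
      exact le_refl _
  linarith

/-- for every binary `x`, the follower's optimal value equals the sum,
over the follower's groups, of the dual minima. -/
theorem follower_dual_value (n kf : ℕ) (β : ℕ → ℝ)
    (hβ0 : β 0 = 0)
    (hβmono : ∀ i j : ℕ, i ≤ j → j ≤ n → β i ≤ β j)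
    (F : Fin kf → Finset ℕ) (f : Fin kf → ℕ)
    (hFsub : ∀ k, F k ⊆ Finset.Icc 1 n)
    (hFdisj : ∀ k k', k ≠ k' → Disjoint (F k) (F k'))
    (hFcover : ∀ i ∈ Finset.Icc 1 n, ∃ k, i ∈ F k)
    (x : ℕ → ℝ) (hx : ∀ i, x i = 0 ∨ x i = 1) :
    followerVal n kf F f β x = ∑ k : Fin kf, dualVal n (F k) (f k) β x := by
  classical
  set A : Fin kf → Finset ℕ := fun k => (F k).filter (fun i => x i = 0) with hA
  set T : Fin kf → Finset ℕ := fun k => topf (A k) (f k) with hT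
  set Tall : Finset ℕ := Finset.univ.biUnion T with hTall
  set y : ℕ → ℝ := fun i => if i ∈ Tall then 1 else 0 with hy
  have hx1 : ∀ i, x i ≤ 1 := fun i => by rcases hx i with h | h <;> simp [h]
  have hTA : ∀ k, T k ⊆ A k := fun k => topf_subset _ _
  have hAF : ∀ k, A k ⊆ F k := fun k => Finset.filter_subset _ _
  have hicc : Finset.Icc 1 n = Finset.univ.biUnion F := by
    ext i
    simp only [Finset.mem_biUnion, Finset.mem_univ, true_and]
    constructor
    · intro hi; exact hFcover i hi
    · rintro ⟨k, hk⟩; exact hFsub k hk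
  have hdisj : ((Finset.univ : Finset (Fin kf)) : Set (Fin kf)).PairwiseDisjoint F :=
    fun k _ k' _ hkk' => hFdisj k k' hkk'
  have hFT : ∀ k, F k ∩ Tall = T k := by
    intro k
    apply Finset.Subset.antisymm
    · intro i hi
      rcases Finset.mem_inter.mp hi with ⟨hiF, hiT⟩
      rcases Finset.mem_biUnion.mp hiT with ⟨k', _, hk'⟩
      rcases eq_or_ne k' k with rfl | hne
      · exact hk'
      · exact absurd hiF (Finset.disjoint_left.mp (hFdisj k' k hne) (hAF k' (hTA k' hk')))
    · intro i hi
      exact Finset.mem_inter.mpr ⟨hAF k (hTA k hi),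
        Finset.mem_biUnion.mpr ⟨k, Finset.mem_univ k, hi⟩⟩
  have hsplit : ∀ z : ℕ → ℝ,
      ∑ i ∈ Finset.Icc 1 n, β i * z i = ∑ k : Fin kf, ∑ i ∈ F k, β i * z i := by
    intro z; rw [hicc, Finset.sum_biUnion hdisj]
  have hD : IsGreatest {v : ℝ | ∃ y : ℕ → ℝ,
      (∀ i, y i = 0 ∨ y i = 1) ∧
      (∀ i, y i ≤ 1 - x i) ∧
      (∀ k : Fin kf, ∑ i ∈ F k, y i ≤ (f k : ℝ)) ∧
      v = ∑ i ∈ Finset.Icc 1 n, β i * y i}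
      (∑ k : Fin kf, dualVal n (F k) (f k) β x) := by
    constructor
    · refine ⟨y, ?_, ?_, ?_, ?_⟩
      · intro i; by_cases h : i ∈ Tall <;> simp [hy, h]
      · intro i
        by_cases h : i ∈ Tall
        · rcases Finset.mem_biUnion.mp h with ⟨k, _, hk⟩
          have hx0 : x i = 0 := (Finset.mem_filter.mp (hTA k hk)).2
          simp [hy, h, hx0]
        · simp only [hy, if_neg h]
          linarith [hx1 i]
      · intro k
        have hsum : ∑ i ∈ F k, y i = ((T k).card : ℝ) := by
          simp only [hy, Finset.sum_ite_mem, Finset.sum_const, nsmul_eq_mul, mul_one]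
          rw [hFT k]
        rw [hsum]
        exact_mod_cast topf_card_le (A k) (f k)
      · rw [hsplit y]
        apply Finset.sum_congr rfl
        intro k _
        rw [dual_eq_top n β hβ0 hβmono (F k) (hFsub k) (f k) x hx]
        simp only [hy, mul_ite, mul_one, mul_zero, Finset.sum_ite_mem]
        rw [hFT k]
    · rintro v ⟨z, hz01, hz1, hzf, rfl⟩
      rw [hsplit z]
      apply Finset.sum_le_sum
      intro k _
      exact weak_duality n β hβ0 hβmono (F k) (hFsub k) (f k) x z
        (fun i => by rcases hz01 i with h | h <;> simp [h]) hz1 (hzf k)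
  rw [followerVal]
  exact hD.csSup_eq
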